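/- Let B be a real-valued stochastic process with B_0 = 0, independent increments over disjoint intervals, and B_t − B_s Gaussian with mean 0 and variance t − s for all 0 ≤ s ≤ t. Fix ε > 0 and let B̄ be the polygonal interpolation of B on the mesh t_n = nε. Then for every real q ≥ 1 there is a finite constant c_q, depending only on q (and not on ε or t), such that sup_{t ≥ 0} E[|B_t − B̄_t|^q]^{1/q} ≤ c_q √ε. -/

import Mathlib

open MeasureTheory ProbabilityTheory Set
open scoped ENNReal

private lemma integrable_abs_rpow_mul_exp {b : ℝ} (hb : 0 < b) {s : ℝ} (hs : -1 < s) :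
    Integrable fun x : ℝ => |x| ^ s * Real.exp (-b * x ^ 2) := by
  have hIoi : IntegrableOn (fun x : ℝ => |x| ^ s * Real.exp (-b * x ^ 2)) (Ioi 0) := by
    refine (integrableOn_rpow_mul_exp_neg_mul_sq hb hs).congr_fun ?_ measurableSet_Ioi
    intro x hx
    dsimp only
    rw [abs_of_pos hx]
  rw [← integrableOn_univ, ← @Iio_union_Ici _ _ (0 : ℝ), integrableOn_union]
  constructor
  · rw [← (Measure.measurePreserving_neg (volume : Measure ℝ)).integrableOn_comp_preimage
        (Homeomorph.neg ℝ).measurableEmbedding]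
    simp only [Function.comp_def, abs_neg, neg_sq, neg_preimage, neg_Iio, neg_zero]
    exact hIoi
  · rw [integrableOn_Ici_iff_integrableOn_Ioi]
    exact hIoi

private lemma integrable_abs_rpow_gaussian {s : ℝ} (hs : 0 ≤ s) :
    Integrable (fun x : ℝ => |x| ^ s) (gaussianReal 0 1) := by
  rw [gaussianReal_of_var_ne_zero 0 one_ne_zero,
    integrable_withDensity_iff (measurable_gaussianPDF 0 1)
      (Filter.Eventually.of_forall fun x => ENNReal.ofReal_lt_top)]
  have heq : (fun x : ℝ => |x| ^ s * (gaussianPDF 0 1 x).toReal)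
      = fun x : ℝ => (Real.sqrt (2 * Real.pi * ((1 : NNReal) : ℝ)))⁻¹
          * (|x| ^ s * Real.exp (-(1/2) * x ^ 2)) := by
    funext x
    rw [gaussianPDF, ENNReal.toReal_ofReal (gaussianPDFReal_nonneg _ _ _), gaussianPDFReal]
    rw [show -(x - (0:ℝ)) ^ 2 / (2 * ((1 : NNReal) : ℝ)) = -(1/2) * x ^ 2 by push_cast; ring]
    ring
  rw [heq]
  exact (integrable_abs_rpow_mul_exp (by norm_num) (by linarith)).const_mul _

private lemma memLp_id_gaussian {q : ℝ} (hq : 1 ≤ q) :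
    MemLp (id : ℝ → ℝ) (ENNReal.ofReal q) (gaussianReal 0 1) := by
  have hq0 : 0 < q := lt_of_lt_of_le one_pos hq
  have hp0 : ENNReal.ofReal q ≠ 0 := by simp [ENNReal.ofReal_eq_zero, not_le, hq0]
  have hpt : ENNReal.ofReal q ≠ ∞ := ENNReal.ofReal_ne_top
  have h := memLp_norm_rpow_iff (p := ENNReal.ofReal q) (q := ENNReal.ofReal q)
    (f := (id : ℝ → ℝ)) (μ := gaussianReal 0 1) aestronglyMeasurable_id hp0 hpt
  rw [ENNReal.div_self hp0 hpt, memLp_one_iff_integrable] at h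
  refine h.mp ?_
  have heq : (fun x : ℝ => ‖id x‖ ^ (ENNReal.ofReal q).toReal) = fun x : ℝ => |x| ^ q := by
    funext x
    rw [ENNReal.toReal_ofReal hq0.le, Real.norm_eq_abs]
    rfl
  rw [heq]
  exact integrable_abs_rpow_gaussian hq0.le

private lemma gaussianReal_eq_map {v : ℝ} (hv : 0 ≤ v) :
    gaussianReal 0 v.toNNReal = (gaussianReal 0 1).map (fun x => Real.sqrt v * x) := by
  have h := gaussianReal_map_const_mul (μ := 0) (v := 1) (Real.sqrt v)
  rw [h, mul_zero]
  congr 1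
  apply NNReal.coe_injective
  simp [Real.sq_sqrt hv, Real.coe_toNNReal v hv]

private lemma eLpNorm_of_gaussian {Ω : Type} [MeasurableSpace Ω] {μ : Measure Ω}
    {X : Ω → ℝ} (hX : Measurable X) {v : ℝ} (hv : 0 ≤ v) (p : ℝ≥0∞)
    (hmap : Measure.map X μ = gaussianReal 0 v.toNNReal) :
    eLpNorm X p μ
      = ENNReal.ofReal (Real.sqrt v) * eLpNorm (id : ℝ → ℝ) p (gaussianReal 0 1) := by
  have h2 : eLpNorm X p μ = eLpNorm (id : ℝ → ℝ) p (gaussianReal 0 v.toNNReal) := by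
    rw [← hmap, eLpNorm_map_measure aestronglyMeasurable_id hX.aemeasurable, Function.id_comp]
  rw [h2, gaussianReal_eq_map hv,
    eLpNorm_map_measure aestronglyMeasurable_id
      (measurable_const_mul (Real.sqrt v)).aemeasurable, Function.id_comp]
  have h3 : (fun x : ℝ => Real.sqrt v * x) = (Real.sqrt v) • (id : ℝ → ℝ) := rfl
  rw [h3, eLpNorm_const_smul]
  congr 1
  rw [← ofReal_norm, Real.norm_eq_abs, abs_of_nonneg (Real.sqrt_nonneg v)]

private lemma main_est {Ω : Type} [MeasurableSpace Ω] {μ : Measure Ω} [IsProbabilityMeasure μ]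
    {q : ℝ} (hq : 1 ≤ q) {X Y : Ω → ℝ} (hXm : Measurable X) (hYm : Measurable Y)
    {u v ε : ℝ} (hu : 0 ≤ u) (hv : 0 ≤ v) (huε : u ≤ ε) (hvε : v ≤ ε)
    (hX : Measure.map X μ = gaussianReal 0 u.toNNReal)
    (hY : Measure.map Y μ = gaussianReal 0 v.toNNReal)
    {c d : ℝ} (hc : |c| ≤ 1) (hd : |d| ≤ 1) :
    (∫ ω, |c * X ω - d * Y ω| ^ q ∂μ) ^ (1/q)
      ≤ (2 * (eLpNorm (id : ℝ → ℝ) (ENNReal.ofReal q) (gaussianReal 0 1)).toReal)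
          * Real.sqrt ε := by
  have hq0 : 0 < q := lt_of_lt_of_le one_pos hq
  set p : ℝ≥0∞ := ENNReal.ofReal q with hp
  have hp0 : p ≠ 0 := by simp [hp, ENNReal.ofReal_eq_zero, not_le, hq0]
  have hpt : p ≠ ⊤ := ENNReal.ofReal_ne_top
  have hp1 : 1 ≤ p := ENNReal.one_le_ofReal.2 hq
  have hptr : p.toReal = q := ENNReal.toReal_ofReal hq0.le
  set K : ℝ≥0∞ := eLpNorm (id : ℝ → ℝ) p (gaussianReal 0 1) with hK
  have hKmem : MemLp (id : ℝ → ℝ) p (gaussianReal 0 1) := memLp_id_gaussian hq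
  have hKne : K ≠ ⊤ := hKmem.2.ne
  -- norms of X and Y
  have hXnorm : eLpNorm X p μ = ENNReal.ofReal (Real.sqrt u) * K :=
    eLpNorm_of_gaussian hXm hu p hX
  have hYnorm : eLpNorm Y p μ = ENNReal.ofReal (Real.sqrt v) * K :=
    eLpNorm_of_gaussian hYm hv p hY
  have hXmem : MemLp X p μ := ⟨hXm.aestronglyMeasurable, by
    rw [hXnorm]; exact ENNReal.mul_lt_top ENNReal.ofReal_lt_top hKmem.2⟩
  have hYmem : MemLp Y p μ := ⟨hYm.aestronglyMeasurable, by
    rw [hYnorm]; exact ENNReal.mul_lt_top ENNReal.ofReal_lt_top hKmem.2⟩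
  have hcoef : ∀ (a : ℝ), |a| ≤ 1 → ∀ (Z : Ω → ℝ) (w : ℝ), 0 ≤ w → w ≤ ε →
      eLpNorm Z p μ = ENNReal.ofReal (Real.sqrt w) * K →
      eLpNorm (a • Z) p μ ≤ ENNReal.ofReal (Real.sqrt ε) * K := by
    intro a ha Z w hw hwε hZ
    rw [eLpNorm_const_smul]
    have h1 : (‖a‖₊ : ℝ≥0∞) ≤ 1 := by
      rw [← ENNReal.coe_one, ENNReal.coe_le_coe, ← NNReal.coe_le_coe, coe_nnnorm,
        Real.norm_eq_abs, NNReal.coe_one]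
      exact ha
    calc (‖a‖₊ : ℝ≥0∞) * eLpNorm Z p μ
        ≤ 1 * (ENNReal.ofReal (Real.sqrt ε) * K) := by
          refine mul_le_mul' h1 ?_
          rw [hZ]
          exact mul_le_mul_left (ENNReal.ofReal_le_ofReal (Real.sqrt_le_sqrt hwε)) K
      _ = ENNReal.ofReal (Real.sqrt ε) * K := one_mul _
  have hXle := hcoef c hc X u hu huε hXnorm
  have hYle := hcoef d hd Y v hv hvε hYnorm
  set D : Ω → ℝ := c • X - d • Y with hD
  have hDmem : MemLp D p μ := (hXmem.const_smul c).sub (hYmem.const_smul d)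
  have hDle : eLpNorm D p μ ≤ 2 * (ENNReal.ofReal (Real.sqrt ε) * K) := by
    calc eLpNorm D p μ ≤ eLpNorm (c • X) p μ + eLpNorm (d • Y) p μ :=
          eLpNorm_sub_le (hXmem.const_smul c).1 (hYmem.const_smul d).1 hp1
      _ ≤ ENNReal.ofReal (Real.sqrt ε) * K + ENNReal.ofReal (Real.sqrt ε) * K :=
          add_le_add hXle hYle
      _ = 2 * (ENNReal.ofReal (Real.sqrt ε) * K) := by ring
  have hfun : (fun ω => |c * X ω - d * Y ω| ^ q) = fun ω => ‖D ω‖ ^ p.toReal := by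
    funext ω
    rw [hptr, Real.norm_eq_abs]
    rfl
  rw [hfun]
  have heq : (∫ ω, ‖D ω‖ ^ p.toReal ∂μ) ^ (1/q) = (eLpNorm D p μ).toReal := by
    rw [hDmem.eLpNorm_eq_integral_rpow_norm hp0 hpt, hptr, one_div,
      ENNReal.toReal_ofReal
        (Real.rpow_nonneg (integral_nonneg fun ω => Real.rpow_nonneg (norm_nonneg _) _) _)]
  rw [heq]
  have hfin : (2 : ℝ≥0∞) * (ENNReal.ofReal (Real.sqrt ε) * K) ≠ ⊤ := by
    refine ENNReal.mul_ne_top (by norm_num) (ENNReal.mul_ne_top ENNReal.ofReal_ne_top hKne)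
  calc (eLpNorm D p μ).toReal ≤ ((2 : ℝ≥0∞) * (ENNReal.ofReal (Real.sqrt ε) * K)).toReal :=
        ENNReal.toReal_mono hfin hDle
    _ = 2 * K.toReal * Real.sqrt ε := by
        rw [ENNReal.toReal_mul, ENNReal.toReal_mul, ENNReal.toReal_ofReal (Real.sqrt_nonneg _),
          ENNReal.toReal_ofNat]
        ring


/-- The polygonal (piecewise linear) interpolation of a process `B` on the uniform
mesh `t_n = nε`. -/
noncomputable def polygonal {Ω : Type*} (ε : ℝ) (B : ℝ → Ω → ℝ) (t : ℝ) (ω : Ω) : ℝ :=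
  B ((⌊t/ε⌋₊ : ℝ) * ε) ω
    + ((t - (⌊t/ε⌋₊ : ℝ) * ε)/ε)
      * (B (((⌊t/ε⌋₊ : ℝ) + 1) * ε) ω - B ((⌊t/ε⌋₊ : ℝ) * ε) ω)

/-- Time-uniform moment bound for the polygonal approximation: for every `q ≥ 1` there is
a constant `c_q`, depending only on `q` (not on the process, on `ε`, or on `t`), with
`sup_{t ≥ 0} E[|B_t − B̄_t|^q]^{1/q} ≤ c_q √ε` for every process `B` with `B_0 = 0` and
independent Gaussian increments of variance `t − s`, and every mesh size `ε > 0`. -/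
theorem stmt_1 :
    ∀ q : ℝ, 1 ≤ q → ∃ c : ℝ,
      ∀ (Ω : Type) [MeasurableSpace Ω] (μ : Measure Ω), IsProbabilityMeasure μ →
      ∀ (B : ℝ → Ω → ℝ), (∀ t, Measurable (B t)) → (∀ ω, B 0 ω = 0) →
      ∀ ε : ℝ, 0 < ε →
      (∀ s t : ℝ, 0 ≤ s → s ≤ t →
        Measure.map (fun ω => B t ω - B s ω) μ = gaussianReal 0 (Real.toNNReal (t - s))) →
      (∀ s₁ t₁ s₂ t₂ : ℝ, 0 ≤ s₁ → s₁ ≤ t₁ → t₁ ≤ s₂ → s₂ ≤ t₂ →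
        IndepFun (fun ω => B t₁ ω - B s₁ ω) (fun ω => B t₂ ω - B s₂ ω) μ) →
      ∀ t : ℝ, 0 ≤ t →
        (∫ ω, |B t ω - polygonal ε B t ω| ^ q ∂μ) ^ (1/q) ≤ c * Real.sqrt ε := by
  intro q hq
  refine ⟨2 * (eLpNorm (id : ℝ → ℝ) (ENNReal.ofReal q) (gaussianReal 0 1)).toReal, ?_⟩
  intro Ω _ μ hμ B hBmeas hB0 ε hε hgauss hindep t ht
  haveI := hμ
  have hfl : ((⌊t/ε⌋₊ : ℝ)) * ε ≤ t := by
    rw [← le_div_iff₀ hε]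
    exact Nat.floor_le (div_nonneg ht hε.le)
  have hfl2 : t ≤ ((⌊t/ε⌋₊ : ℝ) + 1) * ε := by
    rw [← div_le_iff₀ hε]
    exact (Nat.lt_floor_add_one (t/ε)).le
  have hfl0 : (0:ℝ) ≤ (⌊t/ε⌋₊ : ℝ) * ε := by positivity
  set θ : ℝ := (t - (⌊t/ε⌋₊ : ℝ) * ε)/ε with hθ
  have hθ0 : 0 ≤ θ := div_nonneg (by linarith) hε.le
  have hθ1 : θ ≤ 1 := by
    rw [hθ, div_le_one hε]
    nlinarith
  have hDeq : ∀ ω : Ω, B t ω - polygonal ε B t ω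
      = (1 - θ) * (B t ω - B ((⌊t/ε⌋₊ : ℝ) * ε) ω)
        - θ * (B (((⌊t/ε⌋₊ : ℝ) + 1) * ε) ω - B t ω) := by
    intro ω
    simp only [polygonal, hθ]
    ring
  simp only [hDeq]
  exact main_est hq ((hBmeas t).sub (hBmeas _)) ((hBmeas _).sub (hBmeas t))
    (by linarith) (by linarith) (by nlinarith) (by nlinarith)
    (hgauss _ t hfl0 hfl) (hgauss t _ ht hfl2)
    (abs_le.2 ⟨by linarith, by linarith⟩) (abs_le.2 ⟨by linarith, by linarith⟩)
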